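/- The regular action of a finite group G on itself (by right multiplication) is pre-primitive if and only if every subgroup of G is normal (i.e., G is a Dedekind group). -/

import Mathlib

open Equiv

variable {Ω : Type*}

/-- `G` is a transitive permutation group on `Ω`. -/
def IsTransitive (G : Subgroup (Perm Ω)) : Prop :=
  ∀ x y : Ω, ∃ g ∈ G, g x = y

/-- The partition (setoid) `r` of `Ω` is `G`-invariant. -/
def IsInvariantPartition (G : Subgroup (Perm Ω)) (r : Setoid Ω) : Prop :=
  ∀ g ∈ G, ∀ x y : Ω, r.r x y → r.r (g x) (g y)

/-- The partition `r` of `Ω` is the orbit partition of the permutation group `H`. -/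
def IsOrbitPartition (H : Subgroup (Perm Ω)) (r : Setoid Ω) : Prop :=
  ∀ x y : Ω, r.r x y ↔ ∃ h ∈ H, h x = y

/-- `G` is pre-primitive: every `G`-invariant partition is the orbit partition
of a subgroup of `G`. -/
def IsPrePrimitive (G : Subgroup (Perm Ω)) : Prop :=
  ∀ r : Setoid Ω, IsInvariantPartition G r → ∃ H ≤ G, IsOrbitPartition H r

/-- `N` is a normal subgroup of the permutation group `G`. -/
def IsNormalIn (N G : Subgroup (Perm Ω)) : Prop :=
  N ≤ G ∧ ∀ g ∈ G, ∀ n ∈ N, g * n * g⁻¹ ∈ N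


theorem regular_action_preprimitive_iff_dedekind
    {G : Type*} [Group G] [Fintype G] :
    (∀ r : Setoid G, (∀ g x y : G, r.r x y → r.r (x * g) (y * g)) →
        ∃ H : Subgroup G, ∀ x y : G, r.r x y ↔ ∃ h ∈ H, x * h = y) ↔
      ∀ H : Subgroup G, H.Normal := by
  constructor
  · intro hpp H
    set r : Setoid G := ⟨fun x y => y * x⁻¹ ∈ H, by
      constructor
      · intro x; simpa using H.one_mem
      · intro x y h
        have := H.inv_mem h
        simpa using this
      · intro x y z h1 h2
        have := H.mul_mem h2 h1
        simpa [mul_assoc] using this⟩ with hr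
    have hinv : ∀ g x y : G, r.r x y → r.r (x * g) (y * g) := by
      intro g x y h
      show y * g * (x * g)⁻¹ ∈ H
      have : y * g * (x * g)⁻¹ = y * x⁻¹ := by group
      rw [this]; exact h
    obtain ⟨K, hK⟩ := hpp r hinv
    have hmem : ∀ a : G, a ∈ H ↔ a ∈ K := by
      intro a
      have := hK 1 a
      simp only [one_mul] at this
      constructor
      · intro ha
        obtain ⟨h, hh, he⟩ := this.1 (show a * (1:G)⁻¹ ∈ H by simpa using ha)
        rwa [he] at hh
      · intro ha
        have h2 : a * (1:G)⁻¹ ∈ H := this.2 ⟨a, ha, rfl⟩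
        simpa using h2
    constructor
    intro n hn g
    have := hK g⁻¹ (n * g⁻¹)
    have h1 : r.r g⁻¹ (n * g⁻¹) := by
      show n * g⁻¹ * g⁻¹⁻¹ ∈ H
      simpa using hn
    obtain ⟨k, hk, he⟩ := this.1 h1
    have : k = g * n * g⁻¹ := by
      rw [mul_assoc, ← he, ← mul_assoc, mul_inv_cancel, one_mul]
    rw [← this]
    exact (hmem k).2 hk
  · intro hded r hinv
    set H : Subgroup G :=
      { carrier := {s | r.r 1 s}
        mul_mem' := fun {a b} ha hb =>
          r.trans hb (by simpa using hinv b 1 a ha)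
        one_mem' := r.refl 1
        inv_mem' := fun {a} ha =>
          r.symm (by simpa using hinv a⁻¹ 1 a ha) } with hH
    refine ⟨H, ?_⟩
    intro x y
    have hforw : r.r x y ↔ r.r 1 (y * x⁻¹) := by
      constructor
      · intro h; simpa using hinv x⁻¹ x y h
      · intro h; simpa using hinv x 1 (y * x⁻¹) h
    have hnorm := (hded H).conj_mem
    constructor
    · intro h
      refine ⟨x⁻¹ * y, ?_, by group⟩
      have h1 : y * x⁻¹ ∈ H := hforw.1 h
      have := hnorm _ h1 x⁻¹
      simpa [mul_assoc] using this
    · rintro ⟨h, hh, rfl⟩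
      apply hforw.2
      have := hnorm _ hh x
      exact this
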